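/- Let M_t = M_x · M_y with M_x, M_y ≥ 2 and N' ≥ 2, M_t ≥ N'. Let A_t = [a_1, …, a_K] ∈ ℂ^{M_t × K} and Ã_t = [ã_1, …, ã_K] ∈ ℂ^{M_t × K} be two URA steering matrices, i.e. each column is of the form a(ω_x, ω_y)_{(l_y,l_x)} = e^{i(l_y ω_y + l_x ω_x)} (0 ≤ l_x ≤ M_x−1, 0 ≤ l_y ≤ M_y−1), where the K parameter pairs of A_t are pairwise distinct modulo 2π. Then for almost every Q ∈ ℂ^{M_t × N'} (Lebesgue measure): if there exist nonzero scalars ξ_1, …, ξ_K ∈ ℂ such that Q^H Ã_t diag(ξ_1,…,ξ_K) = Q^H A_t, then Ã_t = A_t and ξ_1 = ⋯ = ξ_K = 1. -/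

import Mathlib

open scoped BigOperators Matrix
open MeasureTheory

namespace SteeringAux

open Filter Function

noncomputable section

instance haarPiC (n : ℕ) : Measure.IsAddHaarMeasure (volume : Measure (Fin n → ℂ)) := by
  rw [MeasureTheory.volume_pi]
  exact { toIsFiniteMeasureOnCompacts := inferInstance,
          toIsAddLeftInvariant := inferInstance,
          toIsOpenPosMeasure := inferInstance }

instance haarPiPiC (m k n : ℕ) :
    Measure.IsAddHaarMeasure (volume : Measure ((Fin m × Fin k) → Fin n → ℂ)) := by
  rw [MeasureTheory.volume_pi]
  exact { toIsFiniteMeasureOnCompacts := inferInstance,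
          toIsAddLeftInvariant := inferInstance,
          toIsOpenPosMeasure := inferInstance }

instance haarCC : Measure.IsAddHaarMeasure (volume : Measure (ℂ × ℂ)) := by
  rw [Measure.volume_eq_prod]; exact Measure.prod.instIsAddHaarMeasure _ _
instance haarCCC : Measure.IsAddHaarMeasure (volume : Measure (ℂ × ℂ × ℂ)) := by
  rw [Measure.volume_eq_prod]; exact Measure.prod.instIsAddHaarMeasure _ _
instance haarCCCC : Measure.IsAddHaarMeasure (volume : Measure ((ℂ × ℂ × ℂ) × ℂ)) := by
  rw [Measure.volume_eq_prod]; exact Measure.prod.instIsAddHaarMeasure _ _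

/-- The real-linear functional `Q ↦ ∑ p, conj (Q p j) * b p`. -/
def phiL (My Mx N' : ℕ) (j : Fin N') (b : Fin My × Fin Mx → ℂ) :
    ((Fin My × Fin Mx) → Fin N' → ℂ) →ₗ[ℝ] ℂ where
  toFun Q := ∑ p, (starRingEnd ℂ) (Q p j) * b p
  map_add' Q R := by
    simp only [Pi.add_apply, map_add, add_mul]
    exact Finset.sum_add_distrib
  map_smul' r Q := by
    simp only [Pi.smul_apply, RingHom.id_apply, Complex.real_smul, map_mul,
      Complex.conj_ofReal, Finset.mul_sum, mul_assoc]

lemma pair_indep {ι : Type*} {b1 b2 : ι → ℂ} (p0 : ι) (h1 : b1 p0 = 1) (h2 : b2 p0 = 1)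
    (hne : b1 ≠ b2) : LinearIndependent ℂ ![b1, b2] := by
  rw [LinearIndependent.pair_iff]
  intro s t hst
  have hp : ∀ p, s * b1 p + t * b2 p = 0 := by
    intro p
    have := congrFun hst p
    simpa using this
  have h0 : s + t = 0 := by have := hp p0; rwa [h1, h2, mul_one, mul_one] at this
  have hs : s = 0 := by
    by_contra hs0
    apply hne
    funext p
    have := hp p
    have ht : t = -s := by linear_combination h0
    rw [ht] at this
    have : s * (b1 p - b2 p) = 0 := by ring_nf; linear_combination this
    rcases mul_eq_zero.1 this with h | h
    · exact absurd h hs0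
    · linear_combination h
  refine ⟨hs, ?_⟩
  rw [hs, zero_add] at h0
  exact h0

lemma exists_dual_pair {ι : Type*} [Fintype ι] [DecidableEq ι] {b1 b2 : ι → ℂ}
    (h : LinearIndependent ℂ ![b1, b2]) :
    ∃ d1 d2 : ι → ℂ, (∑ p, d1 p * b1 p) = 1 ∧ (∑ p, d1 p * b2 p) = 0 ∧
      (∑ p, d2 p * b1 p) = 0 ∧ (∑ p, d2 p * b2 p) = 1 := by
  obtain ⟨f1, f2, hf11, hf12, hf21, hf22⟩ :
      ∃ f1 f2 : (ι → ℂ) →ₗ[ℂ] ℂ, f1 b1 = 1 ∧ f1 b2 = 0 ∧ f2 b1 = 0 ∧ f2 b2 = 1 := by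
    obtain ⟨T, hT⟩ := Submodule.exists_isCompl (Submodule.span ℂ (Set.range ![b1, b2]))
    have hmem : ∀ i : Fin 2, ![b1, b2] i ∈ Submodule.span ℂ (Set.range ![b1, b2]) :=
      fun i => Submodule.subset_span ⟨i, rfl⟩
    have hπ : ∀ i : Fin 2,
        Submodule.projectionOnto _ T hT (![b1, b2] i) = Module.Basis.span h i := by
      intro i
      have h1 := Submodule.linearProjOfIsCompl_apply_left hT
        (⟨![b1, b2] i, hmem i⟩ : Submodule.span ℂ (Set.range ![b1, b2]))
      rw [show (((⟨![b1, b2] i, hmem i⟩ : Submodule.span ℂ (Set.range ![b1, b2]))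
        : ι → ℂ)) = ![b1, b2] i from rfl] at h1
      rw [h1]
      exact (Module.Basis.span_apply h i).symm
    have hπ0 : Submodule.projectionOnto _ T hT b1 = Module.Basis.span h 0 := by
      simpa only [Matrix.cons_val_zero] using hπ 0
    have hπ1 : Submodule.projectionOnto _ T hT b2 = Module.Basis.span h 1 := by
      simpa only [Matrix.cons_val_one, Matrix.head_cons, Matrix.cons_val_zero] using hπ 1
    have hcoord : ∀ i j : Fin 2,
        (Module.Basis.span h).coord i (Module.Basis.span h j) = if j = i then 1 else 0 := by
      intro i j
      rw [Module.Basis.coord_apply, Module.Basis.repr_self, Finsupp.single_apply]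
    refine ⟨((Module.Basis.span h).coord 0).comp (Submodule.projectionOnto _ T hT),
      ((Module.Basis.span h).coord 1).comp (Submodule.projectionOnto _ T hT), ?_, ?_, ?_, ?_⟩
    · simp only [LinearMap.comp_apply]; rw [hπ0, hcoord 0 0]; simp
    · simp only [LinearMap.comp_apply]; rw [hπ1, hcoord 0 1]; simp
    · simp only [LinearMap.comp_apply]; rw [hπ0, hcoord 1 0]; simp
    · simp only [LinearMap.comp_apply]; rw [hπ1, hcoord 1 1]; simp
  have key : ∀ (f : (ι → ℂ) →ₗ[ℂ] ℂ) (b : ι → ℂ),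
      (∑ p, f (Pi.single p (1 : ℂ)) * b p) = f b := by
    intro f b
    conv_rhs => rw [← Finset.univ_sum_single b, map_sum]
    refine Finset.sum_congr rfl fun p _ => ?_
    have : Pi.single p (b p) = b p • (Pi.single p (1 : ℂ) : ι → ℂ) := by
      rw [← Pi.single_smul, smul_eq_mul, mul_one]
    rw [this, _root_.map_smul, smul_eq_mul]
    ring
  exact ⟨fun p => f1 (Pi.single p (1 : ℂ)), fun p => f2 (Pi.single p (1 : ℂ)), by
    rw [key]; exact hf11, by rw [key]; exact hf12, by rw [key]; exact hf21, by
    rw [key]; exact hf22⟩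

lemma ae_phi_ne_zero (My Mx N' : ℕ) (j : Fin N') (b : Fin My × Fin Mx → ℂ) (hb : b ≠ 0) :
    ∀ᵐ Q ∂(volume : Measure ((Fin My × Fin Mx) → Fin N' → ℂ)), phiL My Mx N' j b Q ≠ 0 := by
  obtain ⟨p0, hp0⟩ : ∃ p, b p ≠ 0 := by
    by_contra hc; push_neg at hc; exact hb (funext hc)
  have hsurj : Function.Surjective (phiL My Mx N' j b) := by
    intro z
    refine ⟨fun p i => if p = p0 ∧ i = j then (starRingEnd ℂ) (z / b p0) else 0, ?_⟩
    show (∑ p, (starRingEnd ℂ) (if p = p0 ∧ j = j then (starRingEnd ℂ) (z / b p0) else 0) * b p) = z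
    rw [Finset.sum_eq_single p0]
    · simp [Complex.conj_conj, div_mul_cancel₀ _ hp0]
    · intro q _ hq; simp [hq]
    · simp
  have hs : MeasurableSet {z : ℂ | z ≠ 0} := (measurableSet_singleton 0).compl
  refine (ae_comp_linearMap_mem_iff (phiL My Mx N' j b) volume volume hsurj hs).2 ?_
  rw [ae_iff]
  have : {z : ℂ | ¬ z ∈ {z : ℂ | z ≠ 0}} = {(0 : ℂ)} := by ext z; simp
  rw [this]
  exact measure_singleton 0

lemma ae_det_ne_zero (My Mx N' : ℕ) (j0 j1 : Fin N') (hj : j0 ≠ j1)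
    (b1 b2 : Fin My × Fin Mx → ℂ) (hli : LinearIndependent ℂ ![b1, b2]) :
    ∀ᵐ Q ∂(volume : Measure ((Fin My × Fin Mx) → Fin N' → ℂ)),
      phiL My Mx N' j0 b1 Q * phiL My Mx N' j1 b2 Q
        ≠ phiL My Mx N' j0 b2 Q * phiL My Mx N' j1 b1 Q := by
  obtain ⟨d1, d2, h11, h12, h21, h22⟩ := exists_dual_pair hli
  set Ψ : ((Fin My × Fin Mx) → Fin N' → ℂ) →ₗ[ℝ] (ℂ × ℂ × ℂ) × ℂ :=
    ((phiL My Mx N' j0 b2).prod ((phiL My Mx N' j1 b1).prod (phiL My Mx N' j1 b2))).prod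
      (phiL My Mx N' j0 b1) with hΨ
  have hsurj : Function.Surjective Ψ := by
    rintro ⟨⟨β, γ, δ⟩, α⟩
    set Q : (Fin My × Fin Mx) → Fin N' → ℂ := fun p i =>
      if i = j0 then (starRingEnd ℂ) (α * d1 p + β * d2 p)
      else if i = j1 then (starRingEnd ℂ) (γ * d1 p + δ * d2 p) else 0 with hQ
    have c0 : ∀ b : Fin My × Fin Mx → ℂ,
        phiL My Mx N' j0 b Q = α * (∑ p, d1 p * b p) + β * (∑ p, d2 p * b p) := by
      intro b
      show (∑ p, (starRingEnd ℂ) (Q p j0) * b p) = _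
      rw [Finset.mul_sum, Finset.mul_sum, ← Finset.sum_add_distrib]
      refine Finset.sum_congr rfl fun p _ => ?_
      simp only [hQ, if_pos rfl, if_true, eq_self_iff_true, Complex.conj_conj]
      ring
    have c1 : ∀ b : Fin My × Fin Mx → ℂ,
        phiL My Mx N' j1 b Q = γ * (∑ p, d1 p * b p) + δ * (∑ p, d2 p * b p) := by
      intro b
      show (∑ p, (starRingEnd ℂ) (Q p j1) * b p) = _
      rw [Finset.mul_sum, Finset.mul_sum, ← Finset.sum_add_distrib]
      refine Finset.sum_congr rfl fun p _ => ?_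
      simp only [hQ, if_neg (Ne.symm hj), if_pos rfl, if_true, eq_self_iff_true,
        Complex.conj_conj]
      ring
    refine ⟨Q, ?_⟩
    have e1 : phiL My Mx N' j0 b2 Q = β := by rw [c0 b2, h12, h22]; ring
    have e2 : phiL My Mx N' j1 b1 Q = γ := by rw [c1 b1, h11, h21]; ring
    have e3 : phiL My Mx N' j1 b2 Q = δ := by rw [c1 b2, h12, h22]; ring
    have e4 : phiL My Mx N' j0 b1 Q = α := by rw [c0 b1, h11, h21]; ring
    show ((phiL My Mx N' j0 b2 Q, (phiL My Mx N' j1 b1 Q, phiL My Mx N' j1 b2 Q)),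
      phiL My Mx N' j0 b1 Q) = ((β, γ, δ), α)
    rw [e1, e2, e3, e4]
  have hmeasbad : MeasurableSet {x : (ℂ × ℂ × ℂ) × ℂ | x.2 * x.1.2.2 = x.1.1 * x.1.2.1} := by
    refine (isClosed_eq ?_ ?_).measurableSet <;> fun_prop
  have hs : MeasurableSet {x : (ℂ × ℂ × ℂ) × ℂ | x.2 * x.1.2.2 ≠ x.1.1 * x.1.2.1} :=
    hmeasbad.compl
  have hae : ∀ᵐ x ∂(volume : Measure ((ℂ × ℂ × ℂ) × ℂ)),
      x ∈ {x : (ℂ × ℂ × ℂ) × ℂ | x.2 * x.1.2.2 ≠ x.1.1 * x.1.2.1} := by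
    rw [ae_iff]
    have hset : {x : (ℂ × ℂ × ℂ) × ℂ |
        ¬ x ∈ {x : (ℂ × ℂ × ℂ) × ℂ | x.2 * x.1.2.2 ≠ x.1.1 * x.1.2.1}}
        = {x : (ℂ × ℂ × ℂ) × ℂ | x.2 * x.1.2.2 = x.1.1 * x.1.2.1} := by
      ext x; simp
    rw [hset, Measure.volume_eq_prod]
    rw [Measure.measure_prod_null hmeasbad]
    have hz : ∀ᵐ x ∂(volume : Measure (ℂ × ℂ × ℂ)), x.2.2 ≠ 0 := by
      rw [ae_iff]
      have : {x : ℂ × ℂ × ℂ | ¬ x.2.2 ≠ 0}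
          = Set.univ ×ˢ ((Set.univ : Set ℂ) ×ˢ ({0} : Set ℂ)) := by
        ext x
        simp only [Set.mem_setOf_eq, not_not, Set.mem_prod, Set.mem_univ, true_and,
          Set.mem_singleton_iff]
      rw [this, Measure.volume_eq_prod, Measure.prod_prod, Measure.volume_eq_prod,
        Measure.prod_prod, measure_singleton, mul_zero, mul_zero]
    filter_upwards [hz] with x hx
    have : (Prod.mk x ⁻¹' {y : (ℂ × ℂ × ℂ) × ℂ | y.2 * y.1.2.2 = y.1.1 * y.1.2.1})
        = {x.1 * x.2.1 / x.2.2} := by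
      ext a
      simp only [Set.mem_preimage, Set.mem_setOf_eq, Set.mem_singleton_iff]
      rw [eq_div_iff hx]
    simp [this]
  have := (ae_comp_linearMap_mem_iff Ψ volume volume hsurj hs).2 hae
  filter_upwards [this] with Q hQ
  exact hQ

end

end SteeringAux

/-- Corollary 1 of the paper: a URA steering matrix `A_t` with pairwise distinct
parameter pairs (mod 2π) is uniquely identifiable from the compressed, column-scaled
measurement `Qᴴ Ã_t diag(ξ) = Qᴴ A_t`, for almost every compression matrix `Q`:
necessarily `Ã_t = A_t` and every `ξ_k = 1`. -/
theorem steering_matrix_compressed_identifiability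
    (Mx My N' K : ℕ) (hMx : 2 ≤ Mx) (hMy : 2 ≤ My) (hN' : 2 ≤ N') (hK : 1 ≤ K)
    (hMt : N' ≤ Mx * My)
    (ωx ωy ωx' ωy' : Fin K → ℝ)
    (A A' : Matrix (Fin My × Fin Mx) (Fin K) ℂ)
    (hA : ∀ (p : Fin My × Fin Mx) (k : Fin K),
      A p k = Complex.exp (Complex.I * ((((p.1 : ℕ) : ℝ) * ωy k + ((p.2 : ℕ) : ℝ) * ωx k : ℝ) : ℂ)))
    (hA' : ∀ (p : Fin My × Fin Mx) (k : Fin K),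
      A' p k = Complex.exp (Complex.I * ((((p.1 : ℕ) : ℝ) * ωy' k + ((p.2 : ℕ) : ℝ) * ωx' k : ℝ) : ℂ)))
    (hdist : ∀ k j : Fin K, k ≠ j →
      (Complex.exp (Complex.I * (ωx k : ℂ)), Complex.exp (Complex.I * (ωy k : ℂ)))
      ≠ (Complex.exp (Complex.I * (ωx j : ℂ)), Complex.exp (Complex.I * (ωy j : ℂ)))) :
    ∀ᵐ Q ∂(volume : Measure ((Fin My × Fin Mx) → Fin N' → ℂ)),
      ∀ ξ : Fin K → ℂ, (∀ k, ξ k ≠ 0) →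
        (Matrix.of Q)ᴴ * A' * Matrix.diagonal ξ = (Matrix.of Q)ᴴ * A →
        A' = A ∧ ∀ k, ξ k = 1 := by
    classical
  haveI : NeZero My := ⟨by omega⟩
  haveI : NeZero Mx := ⟨by omega⟩
  set P0 : Fin My × Fin Mx := (0, 0) with hP0def
  have hA1 : ∀ k, A P0 k = 1 := by
    intro k; rw [hA]; simp [hP0def]
  have hA'1 : ∀ k, A' P0 k = 1 := by
    intro k; rw [hA']; simp [hP0def]
  have h0N : 0 < N' := by omega
  have h1N : 1 < N' := by omega
  set j0 : Fin N' := ⟨0, h0N⟩ with hj0def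
  set j1 : Fin N' := ⟨1, h1N⟩ with hj1def
  have hj : j0 ≠ j1 := by simp [hj0def, hj1def]
  have H : ∀ᵐ Q ∂(volume : Measure ((Fin My × Fin Mx) → Fin N' → ℂ)),
      ∀ k : Fin K,
        (SteeringAux.phiL My Mx N' j0 (fun p => A p k) Q ≠ 0 ∧
         ((fun p => A' p k) ≠ (fun p => A p k) →
           SteeringAux.phiL My Mx N' j0 (fun p => A p k) Q *
             SteeringAux.phiL My Mx N' j1 (fun p => A' p k) Q ≠
           SteeringAux.phiL My Mx N' j0 (fun p => A' p k) Q *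
             SteeringAux.phiL My Mx N' j1 (fun p => A p k) Q)) := by
    rw [MeasureTheory.ae_all_iff]
    intro k
    refine (SteeringAux.ae_phi_ne_zero My Mx N' j0 (fun p => A p k) ?_).and ?_
    · intro hc
      have := congrFun hc P0
      rw [hA1 k] at this
      simpa using this
    · by_cases hc : (fun p => A' p k) = (fun p => A p k)
      · exact Filter.Eventually.of_forall fun Q hne => absurd hc hne
      · have hli : LinearIndependent ℂ ![fun p => A p k, fun p => A' p k] :=
          SteeringAux.pair_indep P0 (hA1 k) (hA'1 k) (fun hq => hc hq.symm)
        filter_upwards [SteeringAux.ae_det_ne_zero My Mx N' j0 j1 hj _ _ hli] with Q hQ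
        exact fun _ => hQ
  filter_upwards [H] with Q hQ
  intro ξ hξ heq
  have key : ∀ (j : Fin N') (k : Fin K),
      ξ k * SteeringAux.phiL My Mx N' j (fun p => A' p k) Q
        = SteeringAux.phiL My Mx N' j (fun p => A p k) Q := by
    intro j k
    have h1 : ((Matrix.of Q)ᴴ * A' * Matrix.diagonal ξ) j k = ((Matrix.of Q)ᴴ * A) j k :=
      (Matrix.ext_iff.mpr heq) j k
    rw [Matrix.mul_diagonal, Matrix.mul_apply, Matrix.mul_apply] at h1
    simp only [Matrix.conjTranspose_apply, Matrix.of_apply, Complex.star_def] at h1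
    show ξ k * ∑ p, (starRingEnd ℂ) (Q p j) * A' p k
      = ∑ p, (starRingEnd ℂ) (Q p j) * A p k
    rw [← h1]
    ring
  have hcol : ∀ k, (fun p => A' p k) = (fun p => A p k) ∧ ξ k = 1 := by
    intro k
    by_cases hc : (fun p => A' p k) = (fun p => A p k)
    · refine ⟨hc, ?_⟩
      have h2 := key j0 k
      rw [hc] at h2
      have h3 : ξ k * SteeringAux.phiL My Mx N' j0 (fun p => A p k) Q
          = 1 * SteeringAux.phiL My Mx N' j0 (fun p => A p k) Q := by
        rw [one_mul]; exact h2
      exact mul_right_cancel₀ (hQ k).1 h3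
    · exfalso
      apply (hQ k).2 hc
      rw [← key j0 k, ← key j1 k]
      ring
  exact ⟨Matrix.ext fun p k => congrFun (hcol k).1 p, fun k => (hcol k).2⟩
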